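/- Let V : H → K be a linear isometry between complex Hilbert spaces, T ∈ B(K), u a unitary operator on H, and r ∈ B(K) an operator commuting with T (rT = Tr). Then for all ξ, η ∈ H: |⟨(V*TV·u − u·V*TV)ξ, η⟩| ≤ ‖T‖·(‖(Vu − rV)ξ‖·‖η‖ + ‖ξ‖·‖(r*V − Vu*)η‖). -/

import Mathlib

open ContinuousLinearMap

/-- Quantitative commutator estimate: for an isometry `V`, `T ∈ B(K)`, a unitary `u` on `H`,
and `r ∈ B(K)` commuting with `T`,
`|⟨(V*TV·u − u·V*TV)ξ, η⟩| ≤ ‖T‖(‖(Vu − rV)ξ‖‖η‖ + ‖ξ‖‖(r*V − Vu*)η‖)`. -/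
theorem commutator_estimate
    {H K : Type*} [NormedAddCommGroup H] [InnerProductSpace ℂ H] [CompleteSpace H]
    [NormedAddCommGroup K] [InnerProductSpace ℂ K] [CompleteSpace K]
    (V : H →L[ℂ] K) (hV : ∀ ξ : H, ‖V ξ‖ = ‖ξ‖)
    (T : K →L[ℂ] K) (u : H →L[ℂ] H) (hu : u ∈ unitary (H →L[ℂ] H))
    (r : K →L[ℂ] K) (hr : r * T = T * r) (ξ η : H) :
    ‖(inner ℂ
        ((((ContinuousLinearMap.adjoint V).comp (T.comp V)) * u -
            u * ((ContinuousLinearMap.adjoint V).comp (T.comp V))) ξ)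
        η : ℂ)‖ ≤
      ‖T‖ * (‖(V.comp u - r.comp V) ξ‖ * ‖η‖ +
        ‖ξ‖ * ‖((star r).comp V - V.comp (star u)) η‖) := by
  have key : (inner ℂ
        ((((ContinuousLinearMap.adjoint V).comp (T.comp V)) * u -
            u * ((ContinuousLinearMap.adjoint V).comp (T.comp V))) ξ)
        η : ℂ)
      = inner ℂ (T ((V.comp u - r.comp V) ξ)) (V η)
        + inner ℂ (T (V ξ)) (((star r).comp V - V.comp (star u)) η) := by
    have hru : r (T (V ξ)) = T (r (V ξ)) := by
      have := congrFun (congrArg DFunLike.coe hr) (V ξ)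
      simpa using this
    simp only [sub_apply, mul_apply_eq_comp, comp_apply, map_sub, inner_sub_left, inner_sub_right,
      adjoint_inner_left, star_eq_adjoint]
    have h1 : (inner ℂ (u ((ContinuousLinearMap.adjoint V) (T (V ξ)))) η : ℂ)
        = inner ℂ (T (V ξ)) (V ((ContinuousLinearMap.adjoint u) η)) := by
      rw [← adjoint_inner_right u, adjoint_inner_left]
    have h2 : (inner ℂ (T (V ξ)) ((ContinuousLinearMap.adjoint r) (V η)) : ℂ)
        = inner ℂ (T (r (V ξ))) (V η) := by
      rw [adjoint_inner_right, hru]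
    rw [h1, h2]
    ring
  rw [key]
  calc ‖(inner ℂ (T ((V.comp u - r.comp V) ξ)) (V η)
        + inner ℂ (T (V ξ)) (((star r).comp V - V.comp (star u)) η) : ℂ)‖
      ≤ ‖(inner ℂ (T ((V.comp u - r.comp V) ξ)) (V η) : ℂ)‖
        + ‖(inner ℂ (T (V ξ)) (((star r).comp V - V.comp (star u)) η) : ℂ)‖ := norm_add_le _ _
    _ ≤ ‖T ((V.comp u - r.comp V) ξ)‖ * ‖V η‖
        + ‖T (V ξ)‖ * ‖((star r).comp V - V.comp (star u)) η‖ := by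
        gcongr <;> exact norm_inner_le_norm _ _
    _ ≤ (‖T‖ * ‖(V.comp u - r.comp V) ξ‖) * ‖η‖
        + (‖T‖ * ‖ξ‖) * ‖((star r).comp V - V.comp (star u)) η‖ := by
        rw [hV η]
        gcongr
        · exact T.le_opNorm _
        · calc ‖T (V ξ)‖ ≤ ‖T‖ * ‖V ξ‖ := T.le_opNorm _
            _ = ‖T‖ * ‖ξ‖ := by rw [hV]
    _ = ‖T‖ * (‖(V.comp u - r.comp V) ξ‖ * ‖η‖ +
        ‖ξ‖ * ‖((star r).comp V - V.comp (star u)) η‖) := by ring
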